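/- Let X be a complex Banach space and suppose S is a semigroup of operators with rank[S,T] ≤ 1 for all S,T ∈ S containing operators A, B, C with [A,B] = y⊗φ, φ(y)=0, φ(Cy)=1. If [AB,C] = (αy + βCy) ⊗ (γφ + C*φ) (normalized δ = 1) and [BA,C] has rank ≤ 1, then α = 1 + βγ, β ≠ 0, and setting k = 1/β + γ one has [AB,C] = β(ky + Cy) ⊗ (γφ + C*φ) and [BA,C] = β(γy + Cy) ⊗ (kφ + C*φ). -/

import Mathlib

open ContinuousLinearMap in
private lemma dep2' {X : Type*} [NormedAddCommGroup X] [NormedSpace ℂ X] {T : X →L[ℂ] X}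
    (h : LinearMap.rank (T : X →ₗ[ℂ] X) ≤ 1) (x1 x2 : X) :
    ∃ s t : ℂ, ¬(s = 0 ∧ t = 0) ∧ s • T x1 + t • T x2 = 0 := by
  by_contra hc
  have hli : LinearIndependent ℂ ![T x1, T x2] := by
    rw [LinearIndependent.pair_iff]
    intro s t hst
    by_contra h0
    exact hc ⟨s, t, h0, hst⟩
  set T' : X →ₗ[ℂ] X := (T : X →ₗ[ℂ] X)
  have hv : ∀ i : Fin 2, (![T x1, T x2] i) ∈ LinearMap.range T' := by
    intro i
    fin_cases i
    · exact ⟨x1, rfl⟩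
    · exact ⟨x2, rfl⟩
  set v : Fin 2 → LinearMap.range T' := fun i => ⟨![T x1, T x2] i, hv i⟩ with hvdef
  have hli2 : LinearIndependent ℂ v := by
    apply LinearIndependent.of_comp (LinearMap.range T').subtype
    convert hli using 1
    funext i; rfl
  have hcard := hli2.cardinal_lift_le_rank
  have h2 : Cardinal.lift.{0} (LinearMap.rank T') ≤ Cardinal.lift.{0} 1 := by
    exact_mod_cast Cardinal.lift_le.mpr h
  simp [Cardinal.mk_fintype] at hcard h2
  have := hcard.trans h2
  norm_num at this

theorem stmt_15 {X : Type*} [NormedAddCommGroup X] [NormedSpace ℂ X] [CompleteSpace X]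
    (𝒮 : Set (X →L[ℂ] X)) (hmul : ∀ S ∈ 𝒮, ∀ T ∈ 𝒮, S * T ∈ 𝒮)
    (hrank : ∀ S ∈ 𝒮, ∀ T ∈ 𝒮, LinearMap.rank ((S * T - T * S : X →L[ℂ] X) : X →ₗ[ℂ] X) ≤ 1)
    (A B C : X →L[ℂ] X) (hA : A ∈ 𝒮) (hB : B ∈ 𝒮) (hC : C ∈ 𝒮)
    (y : X) (φ : X →L[ℂ] ℂ) (h0 : φ y = 0) (h1 : φ (C y) = 1) (α β γ : ℂ)
    (hAB : A * B - B * A = φ.smulRight y)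
    (hABC : (A * B) * C - C * (A * B) = (γ • φ + φ.comp C).smulRight (α • y + β • C y))
    (hBAC : LinearMap.rank (((B * A) * C - C * (B * A) : X →L[ℂ] X) : X →ₗ[ℂ] X) ≤ 1) :
    α = 1 + β * γ ∧ β ≠ 0 ∧
    (A * B) * C - C * (A * B) =
      β • (γ • φ + φ.comp C).smulRight ((1 / β + γ) • y + C y) ∧
    (B * A) * C - C * (B * A) =
      β • ((1 / β + γ) • φ + φ.comp C).smulRight (γ • y + C y) := by
  -- pointwise versions of the hypotheses
  have hABp : ∀ v : X, A (B v) = B (A v) + φ v • y := by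
    intro v
    have h := congrArg (fun (T : X →L[ℂ] X) => T v) hAB
    simp only [ContinuousLinearMap.sub_apply, ContinuousLinearMap.mul_apply,
      ContinuousLinearMap.smulRight_apply] at h
    exact sub_eq_iff_eq_add'.mp h
  have hPCp : ∀ v : X, A (B (C v)) = C (A (B v)) + (γ * φ v + φ (C v)) • (α • y + β • C y) := by
    intro v
    have h := congrArg (fun (T : X →L[ℂ] X) => T v) hABC
    simp only [ContinuousLinearMap.sub_apply, ContinuousLinearMap.mul_apply,
      ContinuousLinearMap.smulRight_apply, ContinuousLinearMap.add_apply,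
      ContinuousLinearMap.coe_smul', Pi.smul_apply, ContinuousLinearMap.coe_comp',
      Function.comp_apply, smul_eq_mul] at h
    exact sub_eq_iff_eq_add'.mp h
  have hT1p : ∀ v : X, B (A (C v)) - C (B (A v)) =
      (γ * φ v + φ (C v)) • (α • y + β • C y) - φ (C v) • y + φ v • C y := by
    intro v
    have ha := hABp (C v)
    have hb := congrArg C (hABp v)
    rw [map_add, map_smul] at hb
    have h4 : B (A (C v)) = A (B (C v)) - φ (C v) • y := by rw [ha]; abel
    have h5 : C (B (A v)) = C (A (B v)) - φ v • C y := by rw [hb]; abel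
    rw [h4, h5, hPCp v]; abel
  have hy0 : y ≠ 0 := by
    intro h; rw [h] at h1; simp at h1
  have hyCy : ∀ a b : ℂ, a • y + b • C y = 0 → a = 0 ∧ b = 0 := by
    intro a b hab
    have hb : b = 0 := by
      have h := congrArg φ hab
      simpa [h0, h1] using h
    subst hb
    have h : a • y = 0 := by simpa using hab
    rcases smul_eq_zero.mp h with h | h
    exacts [⟨h, rfl⟩, absurd h hy0]
  -- Part 1 : α = 1 + β γ
  have hα : α = 1 + β * γ := by
    by_contra hne
    obtain ⟨s, t, hst0, hst⟩ := dep2' hBAC y (C y)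
    simp only [ContinuousLinearMap.sub_apply, ContinuousLinearMap.mul_apply] at hst
    rw [hT1p y, hT1p (C y), h0, h1] at hst
    have hv : (s * (α - 1) + t * ((γ + φ (C (C y))) * α - φ (C (C y)))) • y
        + (s * β + t * ((γ + φ (C (C y))) * β + 1)) • C y = 0 := by
      rw [← hst]; module
    obtain ⟨e1, e2⟩ := hyCy _ _ hv
    have hd : α - 1 - β * γ ≠ 0 := fun h => hne (by linear_combination h)
    have hs : s = 0 := by
      have h9 : s * (α - 1 - β * γ) = 0 := by
        linear_combination ((γ + φ (C (C y))) * β + 1) * e1 - ((γ + φ (C (C y))) * α - φ (C (C y))) * e2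
      rcases mul_eq_zero.mp h9 with h | h
      exacts [h, absurd h hd]
    have ht : t = 0 := by
      have h9 : t * (α - 1 - β * γ) = 0 := by
        linear_combination (α - 1) * e2 - β * e1
      rcases mul_eq_zero.mp h9 with h | h
      exacts [h, absurd h hd]
    exact hst0 ⟨hs, ht⟩
  -- Part 2 : β ≠ 0
  have hβ : β ≠ 0 := by
    intro hβ0
    have hα1 : α = 1 := by rw [hα, hβ0]; ring
    have hP1 : ∀ v : X, A (B (C v)) = C (A (B v)) + (γ * φ v + φ (C v)) • y := by
      intro v
      have h := hPCp v
      rw [hα1, hβ0] at h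
      simpa using h
    have hQp : ∀ v : X, B (A (C v)) = C (B (A v)) + φ v • (γ • y + C y) := by
      intro v
      have h := hT1p v
      rw [hα1, hβ0] at h
      have h4 : B (A (C v)) - C (B (A v)) = φ v • (γ • y + C y) := by rw [h]; module
      exact sub_eq_iff_eq_add'.mp h4
    have hφz : φ (γ • y + C y) = 1 := by simp [h0, h1]
    have hz0 : (γ • y + C y) ≠ 0 := by
      intro h; rw [h] at hφz; simp at hφz
    -- the functional ψ = γ φ + φ C is a C-eigenvector : ψ ∘ C = lam ψ
    obtain ⟨lam, hlam⟩ : ∃ l : ℂ, ∀ v : X,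
        γ * φ (C v) + φ (C (C v)) = l * (γ * φ v + φ (C v)) := by
      refine ⟨γ + φ (C (C y)), fun v => ?_⟩
      have hr2 := hrank _ (hmul _ hA _ hB) _ (hmul _ hC _ hC)
      obtain ⟨s, t, hst0, hst⟩ := dep2' hr2 v y
      simp only [ContinuousLinearMap.sub_apply, ContinuousLinearMap.mul_apply] at hst
      have hT2p : ∀ w : X, A (B (C (C w))) - C (C (A (B w))) =
          (γ * φ (C w) + φ (C (C w))) • y + (γ * φ w + φ (C w)) • C y := by
        intro w
        have ha := hP1 (C w)
        have hb := congrArg C (hP1 w)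
        rw [map_add, map_smul] at hb
        rw [ha, hb]; abel
      rw [hT2p v, hT2p y, h0, h1] at hst
      have hv : (s * (γ * φ (C v) + φ (C (C v))) + t * (γ + φ (C (C y)))) • y
          + (s * (γ * φ v + φ (C v)) + t) • C y = 0 := by
        rw [← hst]; module
      obtain ⟨e1, e2⟩ := hyCy _ _ hv
      by_cases hs : s = 0
      · have ht : t = 0 := by linear_combination e2 - (γ * φ v + φ (C v)) * hs
        exact absurd ⟨hs, ht⟩ hst0
      · have h9 : s * ((γ * φ (C v) + φ (C (C v))) - (γ + φ (C (C y))) * (γ * φ v + φ (C v))) = 0 := by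
          linear_combination e1 - (γ + φ (C (C y))) * e2
        rcases mul_eq_zero.mp h9 with h | h
        exacts [absurd h hs, by linear_combination h]
    -- the vector z = γ y + C y is a C-eigenvector
    obtain ⟨ν, hν⟩ : ∃ ν : ℂ, C (γ • y + C y) = ν • (γ • y + C y) := by
      have hr3 := hrank _ (hmul _ hB _ hA) _ (hmul _ hC _ hC)
      obtain ⟨s, t, hst0, hst⟩ := dep2' hr3 y (C y)
      simp only [ContinuousLinearMap.sub_apply, ContinuousLinearMap.mul_apply] at hst
      have hT3p : ∀ w : X, B (A (C (C w))) - C (C (B (A w))) =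
          φ (C w) • (γ • y + C y) + φ w • C (γ • y + C y) := by
        intro w
        have ha := hQp (C w)
        have hb := congrArg C (hQp w)
        rw [map_add, map_smul] at hb
        rw [ha, hb]; abel
      rw [hT3p y, hT3p (C y), h0, h1] at hst
      by_cases ht : t = 0
      · exfalso
        rw [ht] at hst
        have hsz : s • (γ • y + C y) = 0 := by rw [← hst]; module
        have hs : s ≠ 0 := fun h => hst0 ⟨h, ht⟩
        rcases smul_eq_zero.mp hsz with h | h
        exacts [hs h, hz0 h]
      · refine ⟨t⁻¹ * (-(s + t * φ (C (C y)))), ?_⟩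
        have h8 : t • C (γ • y + C y) = (-(s + t * φ (C (C y)))) • (γ • y + C y) := by
          have h7 : t • C (γ • y + C y) + (s + t * φ (C (C y))) • (γ • y + C y) = 0 := by
            rw [← hst]; module
          rw [neg_smul]
          exact eq_neg_of_add_eq_zero_left h7
        calc C (γ • y + C y) = (t⁻¹ * t) • C (γ • y + C y) := by
              rw [inv_mul_cancel₀ ht, one_smul]
          _ = t⁻¹ • (t • C (γ • y + C y)) := by rw [mul_smul]
          _ = t⁻¹ • ((-(s + t * φ (C (C y)))) • (γ • y + C y)) := by rw [h8]
          _ = (t⁻¹ * (-(s + t * φ (C (C y))))) • (γ • y + C y) := by rw [mul_smul]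
    by_cases hcase : ∃ ρ : ℂ, B (A y) = ρ • y
    · -- Case II : B A y is a multiple of y
      obtain ⟨ρ, hρ⟩ := hcase
      have hQCy : B (A (C y)) = ρ • C y := by
        have h := hQp y
        rw [h0, hρ] at h
        simp only [zero_smul, add_zero, map_smul] at h
        exact h
      have hQz : B (A (γ • y + C y)) = ρ • (γ • y + C y) := by
        have h6 : B (A (γ • y + C y)) = γ • B (A y) + B (A (C y)) := by
          simp only [map_add, map_smul]
        rw [h6, hρ, hQCy]; module
      have hfin := hQp (γ • y + C y)
      rw [hφz, hν] at hfin
      simp only [map_smul] at hfin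
      rw [hQz] at hfin
      simp only [map_smul] at hfin
      rw [hν] at hfin
      simp only [smul_smul] at hfin
      -- hfin : ν • (ρ • (γ•y + Cy)) = ρ • (ν • (γ•y+Cy)) + 1 • (γ•y+Cy)
      have h13 : (γ • y + C y) = 0 := by
        rw [one_smul, mul_comm ρ ν] at hfin
        exact (left_eq_add.mp hfin)
      exact hz0 h13
    · -- Case I : B A y is not a multiple of y
      push_neg at hcase
      have hker : ∀ v : X, φ v = 0 → φ (B (A v)) = 0 := by
        intro v hv0
        have hr4 := hrank _ (hmul _ hA _ hB) _ (hmul _ hB _ hA)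
        obtain ⟨s, t, hst0, hst⟩ := dep2' hr4 v (C y)
        simp only [ContinuousLinearMap.sub_apply, ContinuousLinearMap.mul_apply] at hst
        have hT4p : ∀ w : X, A (B (B (A w))) - B (A (A (B w))) =
            φ (B (A w)) • y - φ w • (B (A y)) := by
          intro w
          have ha := hABp (B (A w))
          have hb : B (A (A (B w))) = B (A (B (A w))) + φ w • B (A y) := by
            have h6 := congrArg (fun u => B (A u)) (hABp w)
            simpa only [map_add, map_smul] using h6
          rw [ha, hb]; abel
        rw [hT4p v, hT4p (C y), hv0, h1] at hst
        by_cases ht : t = 0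
        · have hs : s ≠ 0 := fun h => hst0 ⟨h, ht⟩
          rw [ht] at hst
          have h7 : (s * φ (B (A v))) • y = 0 := by rw [← hst]; module
          rcases smul_eq_zero.mp h7 with h | h
          · rcases mul_eq_zero.mp h with h' | h'
            exacts [absurd h' hs, h']
          · exact absurd h hy0
        · exfalso
          apply hcase (t⁻¹ * (s * φ (B (A v)) + t * φ (B (A (C y)))))
          have h8 : t • (B (A y)) = (s * φ (B (A v)) + t * φ (B (A (C y)))) • y := by
            have h9 : (s * φ (B (A v)) + t * φ (B (A (C y)))) • y - t • B (A y) = 0 := by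
              rw [← hst]; module
            have := sub_eq_zero.mp h9
            exact this.symm
          calc B (A y) = (t⁻¹ * t) • B (A y) := by rw [inv_mul_cancel₀ ht, one_smul]
            _ = t⁻¹ • (t • B (A y)) := by rw [mul_smul]
            _ = t⁻¹ • ((s * φ (B (A v)) + t * φ (B (A (C y)))) • y) := by rw [h8]
            _ = (t⁻¹ * (s * φ (B (A v)) + t * φ (B (A (C y))))) • y := by rw [mul_smul]
      have hφQ : ∀ v : X, φ (B (A v)) = φ (B (A (C y))) * φ v := by
        intro v
        have h5 : φ (v - φ v • C y) = 0 := by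
          simp [map_sub, map_smul, h1]
        have h6 := hker _ h5
        simp only [map_sub, map_smul, smul_eq_mul] at h6
        linear_combination h6
      have hφP : ∀ v : X, φ (A (B v)) = φ (B (A (C y))) * φ v := by
        intro v
        rw [hABp v]
        simp [map_add, map_smul, h0, hφQ v]
      have hφCP : ∀ v : X, φ (C (A (B v))) = φ (B (A (C y))) * φ (C v) := by
        intro v
        have h8 := congrArg φ (hP1 v)
        simp only [map_add, map_smul, smul_eq_mul] at h8
        rw [hφP (C v), h0] at h8
        linear_combination -h8
      have ψP : ∀ v : X, γ * φ (A (B v)) + φ (C (A (B v))) =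
          φ (B (A (C y))) * (γ * φ v + φ (C v)) := by
        intro v
        rw [hφP v, hφCP v]; ring
      have q1 := ψP (C y)
      have q2 := hlam y
      have q3 := hlam (A (B y))
      have q4 := ψP y
      have h7 := congrArg (fun w => γ * φ w + φ (C w)) (hP1 y)
      simp only [map_add, map_smul, smul_eq_mul] at h7
      rw [h0, h1] at q2 q4 h7
      rw [h1] at q1
      have hcontr : (1 : ℂ) = 0 := by
        linear_combination q1 - h7 + φ (B (A (C y))) * q2 - q3 - lam * q4
      exact one_ne_zero hcontr
  refine ⟨hα, hβ, ?_, ?_⟩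
  · rw [hABC]
    ext x
    simp only [ContinuousLinearMap.smulRight_apply, ContinuousLinearMap.add_apply,
      ContinuousLinearMap.coe_smul', Pi.smul_apply, ContinuousLinearMap.coe_comp',
      Function.comp_apply, smul_eq_mul]
    rw [hα]
    have hb1 : β * (1/β) = 1 := by field_simp
    match_scalars
    · linear_combination (-(γ * φ x)) * hb1 - φ (C x) * hb1
    · ring
  · ext x
    simp only [ContinuousLinearMap.sub_apply, ContinuousLinearMap.mul_apply,
      ContinuousLinearMap.smulRight_apply, ContinuousLinearMap.add_apply,
      ContinuousLinearMap.coe_smul', Pi.smul_apply, ContinuousLinearMap.coe_comp',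
      Function.comp_apply, smul_eq_mul]
    rw [hT1p x, hα]
    have hb1 : β * (1/β) = 1 := by field_simp
    match_scalars
    · linear_combination (-(γ * φ x)) * hb1
    · linear_combination (-(φ x)) * hb1
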